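/- For any permutation A of {1,...,n} with SUS(A) ≤ 2, the buffer sequence M(A) uniquely determines A: at each stage i, either M_i > M_{i-1} and A_i = max(A_1,...,A_{i-1}) + (M_i - M_{i-1}), or M_i ≤ M_{i-1} and A_i is the smallest positive integer not among A_1,...,A_{i-1}. -/
import Mathlib


/-- The set of values appearing in the first `i` entries of `A` (indices `1..i`). -/
def prefSet (A : ℕ → ℕ) (i : ℕ) : Finset ℕ := (Finset.Icc 1 i).image A

/-- `H_i`: the maximum value among the first `i` entries (0 for `i = 0`). -/
def hi (A : ℕ → ℕ) (i : ℕ) : ℕ := (prefSet A i).sup id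

/-- `ACK_i`: the least positive integer not among the first `i` entries. -/
noncomputable def ackSeq (A : ℕ → ℕ) (i : ℕ) : ℕ := sInf {k | 0 < k ∧ k ∉ prefSet A i}

/-- The buffer size `M_i = H_i - (ACK_i - 1)`. -/
noncomputable def buf (A : ℕ → ℕ) (i : ℕ) : ℤ := (hi A i : ℤ) - ackSeq A i + 1

/-- `A` restricted to `{1,...,n}` is a permutation of `{1,...,n}`. -/
def IsPermOn (A : ℕ → ℕ) (n : ℕ) : Prop := Set.BijOn A (Set.Icc 1 n) (Set.Icc 1 n)

/-- The positions `1..n` can be partitioned into `k` classes, each of which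
induces a strictly increasing subsequence of `A`. -/
def SUSle (A : ℕ → ℕ) (n k : ℕ) : Prop :=
  ∃ c : ℕ → ℕ, (∀ i ∈ Finset.Icc 1 n, c i < k) ∧
    ∀ i j, i ∈ Finset.Icc 1 n → j ∈ Finset.Icc 1 n → i < j → c i = c j → A i < A j

/-- `SUS(A)`: minimum number of increasing subsequences partitioning `A₁,…,Aₙ`. -/
noncomputable def sus (A : ℕ → ℕ) (n : ℕ) : ℕ := sInf {k | SUSle A n k}

/-- `LDS(A)`: maximum length of a strictly decreasing subsequence of `A₁,…,Aₙ`. -/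
noncomputable def lds (A : ℕ → ℕ) (n : ℕ) : ℕ :=
  sSup {m | ∃ s : Fin m → ℕ, StrictMono s ∧ (∀ t, s t ∈ Finset.Icc 1 n) ∧
    ∀ t u : Fin m, t < u → A (s u) < A (s t)}

lemma mem_prefSet {A : ℕ → ℕ} {i x : ℕ} :
    x ∈ prefSet A i ↔ ∃ j, 1 ≤ j ∧ j ≤ i ∧ A j = x := by
  simp [prefSet, Finset.mem_image, Finset.mem_Icc, and_assoc]

lemma prefSet_succ (A : ℕ → ℕ) {i : ℕ} (h1 : 1 ≤ i) :
    prefSet A i = insert (A i) (prefSet A (i-1)) := by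
  unfold prefSet
  have : Finset.Icc 1 i = insert i (Finset.Icc 1 (i-1)) := by
    ext x; simp [Finset.mem_Icc, Finset.mem_insert]; omega
  rw [this, Finset.image_insert]

lemma le_hi {A : ℕ → ℕ} {i x : ℕ} (h : x ∈ prefSet A i) : x ≤ hi A i :=
  Finset.le_sup (f := id) h

lemma ack_mem (A : ℕ → ℕ) (i : ℕ) :
    0 < ackSeq A i ∧ ackSeq A i ∉ prefSet A i := by
  have hne : {k | 0 < k ∧ k ∉ prefSet A i}.Nonempty := by
    refine ⟨hi A i + 1, by omega, fun h => ?_⟩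
    have := le_hi h; omega
  exact Nat.sInf_mem hne

lemma ack_le_hi (A : ℕ → ℕ) (i : ℕ) : ackSeq A i ≤ hi A i + 1 := by
  apply Nat.sInf_le
  refine ⟨by omega, fun h => ?_⟩
  have := le_hi h; omega

lemma ack_le {A : ℕ → ℕ} {i x : ℕ} (h0 : 0 < x) (h : x ∉ prefSet A i) :
    ackSeq A i ≤ x := Nat.sInf_le ⟨h0, h⟩

lemma ack_mono (A : ℕ → ℕ) {i : ℕ} (h1 : 1 ≤ i) :
    ackSeq A (i-1) ≤ ackSeq A i := by
  apply ack_le (ack_mem A i).1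
  intro h
  exact (ack_mem A i).2 (by
    rw [prefSet_succ A h1]
    exact Finset.mem_insert_of_mem h)

lemma hi_succ (A : ℕ → ℕ) {i : ℕ} (h1 : 1 ≤ i) :
    hi A i = max (A i) (hi A (i-1)) := by
  unfold hi
  rw [prefSet_succ A h1, Finset.sup_insert]
  rfl


/-- for a permutation with `SUS ≤ 2`, at each stage either the buffer
grows and `A_i = max(A_1,…,A_{i-1}) + (M_i - M_{i-1})`, or it does not grow and
`A_i` is the least missing ID. -/
theorem buffer_determines_sus2 (n : ℕ) (A : ℕ → ℕ) (hA : IsPermOn A n)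
    (hs : sus A n ≤ 2) :
    ∀ i ∈ Finset.Icc 1 n,
      (buf A (i - 1) < buf A i ∧
        (A i : ℤ) = (hi A (i - 1) : ℤ) + (buf A i - buf A (i - 1))) ∨
      (buf A i ≤ buf A (i - 1) ∧ A i = ackSeq A (i - 1)) := by
  -- extract a 2-coloring
  have hne : {k | SUSle A n k}.Nonempty := by
    refine ⟨n + 1, fun i => i, fun i him => ?_, fun i j _ _ hij hc => ?_⟩
    · simp only [Finset.mem_Icc] at him
      show i < n + 1; omega
    · simp only at hc; omega
  obtain ⟨c, hc1, hc2⟩ : SUSle A n (sus A n) := Nat.sInf_mem hne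
  have no3 : ∀ p q r, 1 ≤ p → p < q → q < r → r ≤ n → A q < A p → A r < A q → False := by
    intro p q r hp hpq hqr hrn hd1 hd2
    have hpm : p ∈ Finset.Icc 1 n := by simp only [Finset.mem_Icc]; omega
    have hqm : q ∈ Finset.Icc 1 n := by simp only [Finset.mem_Icc]; omega
    have hrm : r ∈ Finset.Icc 1 n := by simp only [Finset.mem_Icc]; omega
    have hcp := hc1 p hpm; have hcq := hc1 q hqm; have hcr := hc1 r hrm
    have h3 : c p = c q ∨ c p = c r ∨ c q = c r := by omega
    rcases h3 with h | h | h
    · have := hc2 p q hpm hqm hpq h; omega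
    · have := hc2 p r hpm hrm (by omega) h; omega
    · have := hc2 q r hqm hrm hqr h; omega
  intro i him
  simp only [Finset.mem_Icc] at him
  obtain ⟨h1i, hin⟩ := him
  have hAin : A i ∈ Set.Icc 1 n := hA.1 (Set.mem_Icc.mpr ⟨h1i, hin⟩)
  rw [Set.mem_Icc] at hAin
  have hnotmem : A i ∉ prefSet A (i-1) := by
    intro h
    obtain ⟨j, hj1, hj2, hj3⟩ := mem_prefSet.mp h
    have : j = i := hA.2.1 (Set.mem_Icc.mpr ⟨hj1, by omega⟩) (Set.mem_Icc.mpr ⟨h1i, hin⟩) hj3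
    omega
  by_cases hcase : A i = ackSeq A (i-1)
  · right
    refine ⟨?_, hcase⟩
    have h1 := ack_le_hi A (i-1)
    have h2 : hi A i = max (A i) (hi A (i-1)) := hi_succ A h1i
    have h2' : hi A i ≤ hi A (i-1) + 1 := by rw [h2]; exact max_le (by omega) (by omega)
    have h3 : ackSeq A (i-1) < ackSeq A i := by
      rcases lt_or_eq_of_le (ack_mono A h1i) with h | h
      · exact h
      · exfalso
        apply (ack_mem A i).2
        rw [prefSet_succ A h1i, ← h, ← hcase]
        exact Finset.mem_insert_self _ _
    simp only [buf]
    omega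
  · left
    have hackle : ackSeq A (i-1) ≤ A i := ack_le (by omega) hnotmem
    have hacklt : ackSeq A (i-1) < A i := lt_of_le_of_ne hackle (fun h => hcase h.symm)
    have hgt : hi A (i-1) < A i := by
      by_contra hle
      push_neg at hle
      have hpos : 0 < hi A (i-1) := by omega
      have hmemhi : hi A (i-1) ∈ prefSet A (i-1) := by
        have hnem : (prefSet A (i-1)).Nonempty := by
          by_contra hempty
          rw [Finset.not_nonempty_iff_eq_empty] at hempty
          simp [hi, hempty] at hpos
        obtain ⟨b, hb, hbe⟩ := Finset.exists_mem_eq_sup _ hnem id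
        have : hi A (i-1) = b := hbe
        rw [this]; exact hb
      obtain ⟨j, hj1, hj2, hj3⟩ := mem_prefSet.mp hmemhi
      have hAij : A i ≠ hi A (i-1) := fun h => hnotmem (h ▸ hmemhi)
      have hack1 : 1 ≤ ackSeq A (i-1) := (ack_mem A (i-1)).1
      obtain ⟨r, hr, hre⟩ := hA.2.2 (Set.mem_Icc.mpr ⟨hack1, by omega⟩)
      rw [Set.mem_Icc] at hr
      have hri : i < r := by
        by_contra hri'
        push_neg at hri'
        have hrne : r ≠ i := fun h => hcase (by rw [h] at hre; exact hre)
        exact (ack_mem A (i-1)).2 (mem_prefSet.mpr ⟨r, hr.1, by omega, hre⟩)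
      exact no3 j i r hj1 (by omega) hri hr.2 (by omega) (by omega)
    have hhi : hi A i = A i := by
      rw [hi_succ A h1i]; exact max_eq_left (by omega)
    have hackeq : ackSeq A i = ackSeq A (i-1) := by
      apply le_antisymm
      · apply ack_le (ack_mem A (i-1)).1
        rw [prefSet_succ A h1i]
        intro h
        rcases Finset.mem_insert.mp h with h | h
        · exact hcase h.symm
        · exact (ack_mem A (i-1)).2 h
      · exact ack_mono A h1i
    constructor <;> (simp only [buf, hhi, hackeq]; omega)
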